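/- Let τ be a correct compositional translation from SYNCSIMPLE to LOCKSIMPLE_{k,IS} with k ≥ 1. Then there exists a reduction sequence of the process τ(!) | τ(?) (from the initial store IS) that executes every symbol of both τ(!) and τ(?). -/

import Mathlib

/-- Symbols of SYNCSIMPLE: `!` (bang) and `?` (ques). -/
inductive SSym | bang | ques
deriving DecidableEq

/-- A SYNCSIMPLE subprocess: a string over {!,?} ending with `0` (false) or `✓` (true). -/
abbrev SSub := List SSym × Bool

/-- A SYNCSIMPLE process: a multiset of subprocesses. -/
abbrev SProc := Multiset SSub

/-- The SYS reduction: a leading `!` and a leading `?` of two subprocesses are consumed. -/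
def SysStep (P Q : SProc) : Prop :=
  ∃ (u1 u2 : List SSym) (b1 b2 : Bool) (R : SProc),
    P = (SSym.bang :: u1, b1) ::ₘ (SSym.ques :: u2, b2) ::ₘ R ∧
    Q = (u1, b1) ::ₘ (u2, b2) ::ₘ R

/-- A process is successful if it contains the subprocess `✓`. -/
def SSuccessful (P : SProc) : Prop := (([], true) : SSub) ∈ P

def SMayConv (P : SProc) : Prop :=
  ∃ Q, Relation.ReflTransGen SysStep P Q ∧ SSuccessful Q

def SMustConv (P : SProc) : Prop :=
  ∀ Q, Relation.ReflTransGen SysStep P Q → SMayConv Q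

/-- Lock operations: put `P_i` and take `T_i`. -/
inductive LOp | put | take
deriving DecidableEq

abbrev LSym (k : ℕ) := LOp × Fin k
abbrev LSub (k : ℕ) := List (LSym k) × Bool
abbrev LProc (k : ℕ) := Multiset (LSub k)
/-- The store of `k` locks: `true` = full (■), `false` = empty (□). -/
abbrev Store (k : ℕ) := Fin k → Bool

/-- LOCKSIMPLE step: `P_i` fills an empty lock `i` (blocks if full);
    `T_i` empties lock `i` and never blocks. -/
def LockStep {k : ℕ} : (LProc k × Store k) → (LProc k × Store k) → Prop :=
  fun s t => ∃ (i : Fin k) (u : List (LSym k)) (b : Bool) (R : LProc k),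
    ((s.1 = ((LOp.put, i) :: u, b) ::ₘ R ∧ s.2 i = false ∧
      t.1 = (u, b) ::ₘ R ∧ t.2 = Function.update s.2 i true) ∨
     (s.1 = ((LOp.take, i) :: u, b) ::ₘ R ∧
      t.1 = (u, b) ::ₘ R ∧ t.2 = Function.update s.2 i false))

def LSuccessful {k : ℕ} (s : LProc k × Store k) : Prop := (([], true) : LSub k) ∈ s.1

def LMayConv {k : ℕ} (s : LProc k × Store k) : Prop :=
  ∃ t, Relation.ReflTransGen LockStep s t ∧ LSuccessful t

def LMustConv {k : ℕ} (s : LProc k × Store k) : Prop :=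
  ∀ t, Relation.ReflTransGen LockStep s t → LMayConv t

/-- The compositional translation determined by the strings `tb = τ(!)` and `tq = τ(?)`,
    applied to a subprocess. -/
def transSub {k : ℕ} (tb tq : List (LSym k)) (u : SSub) : LSub k :=
  (u.1.flatMap (fun c => match c with | SSym.bang => tb | SSym.ques => tq), u.2)

/-- The compositional translation applied to a process. -/
def transProc {k : ℕ} (tb tq : List (LSym k)) (P : SProc) : LProc k :=
  P.map (transSub tb tq)

/-- Correctness of the compositional translation `(tb, tq)` with initial store `IS`:
    may- and must-convergence are preserved and reflected. -/
def Correct {k : ℕ} (IS : Store k) (tb tq : List (LSym k)) : Prop :=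
  ∀ P : SProc,
    (SMayConv P ↔ LMayConv (transProc tb tq P, IS)) ∧
    (SMustConv P ↔ LMustConv (transProc tb tq P, IS))

/-- The solo execution of the string `s` from store `IS` reaches the point where
    `(put, i) :: rest` remains and deadlocks there since lock `i` is full. -/
def SoloBlocked {k : ℕ} (IS : Store k) (s : List (LSym k)) (i : Fin k)
    (rest : List (LSym k)) : Prop :=
  ∃ C : Store k,
    Relation.ReflTransGen LockStep (({(s, false)} : LProc k), IS)
      (({((LOp.put, i) :: rest, false)} : LProc k), C) ∧
    C i = true

/-- Blocking type `P_i`: the blocking prefix is `R P_i` with `R` free of `P_i, T_i`. -/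
def BlockingTypeP {k : ℕ} (IS : Store k) (s : List (LSym k)) (i : Fin k) : Prop :=
  ∃ r rest, s = r ++ (LOp.put, i) :: rest ∧ (∀ x ∈ r, x.2 ≠ i) ∧
    SoloBlocked IS s i rest

/-- Blocking type `P_i P_i`: the blocking prefix is `R₁ P_i R₂ P_i` with
    `R₂` free of `P_i, T_i`, deadlocking exactly before the last `P_i`. -/
def BlockingTypePP {k : ℕ} (IS : Store k) (s : List (LSym k)) (i : Fin k) : Prop :=
  ∃ r1 r2 rest, s = r1 ++ (LOp.put, i) :: r2 ++ (LOp.put, i) :: rest ∧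
    (∀ x ∈ r2, x.2 ≠ i) ∧ SoloBlocked IS s i rest

section AuxProof

/-- Decompose an equation between a cons and a pair multiset. -/
lemma cons_pair_eq {α : Type*} {a b c : α} {R : Multiset α}
    (h : a ::ₘ R = b ::ₘ ({c} : Multiset α)) :
    (a = b ∧ R = {c}) ∨ (a = c ∧ R = {b}) := by
  rcases Multiset.cons_eq_cons.1 h with ⟨h1, h2⟩ | ⟨_, cs, h1, h2⟩
  · exact Or.inl ⟨h1, h2⟩
  · rcases (Multiset.singleton_eq_cons_iff cs).1 h2 with ⟨hca, hcs⟩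
    subst hcs
    exact Or.inr ⟨hca.symm, by simpa using h1⟩

/-- `LockStep` ignores the boolean flags: any flag reassignment is a simulation. -/
lemma lockstep_map {k : ℕ} (f : Bool → Bool) {s t : LProc k × Store k} (h : LockStep s t) :
    LockStep ((s.1.map (fun u => (u.1, f u.2)), s.2) : LProc k × Store k)
      (t.1.map (fun u => (u.1, f u.2)), t.2) := by
  obtain ⟨i, u, b, R, h⟩ := h
  refine ⟨i, u, f b, R.map (fun u => (u.1, f u.2)), ?_⟩
  rcases h with ⟨h1, h2, h3, h4⟩ | ⟨h1, h3, h4⟩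
  · exact Or.inl ⟨by simp [h1], h2, by simp [h3], h4⟩
  · exact Or.inr ⟨by simp [h1], by simp [h3], h4⟩

lemma rtg_lock_map {k : ℕ} (f : Bool → Bool) {s t : LProc k × Store k}
    (h : Relation.ReflTransGen LockStep s t) :
    Relation.ReflTransGen LockStep
      ((s.1.map (fun u => (u.1, f u.2)), s.2) : LProc k × Store k)
      (t.1.map (fun u => (u.1, f u.2)), t.2) :=
  Relation.ReflTransGen.lift (r := LockStep) (p := LockStep) (fun (s : LProc k × Store k) => ((s.1.map (fun u => (u.1, f u.2)), s.2) : LProc k × Store k))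
    (fun _ _ h => lockstep_map f h) _ _ h

lemma inv_rtg {k : ℕ} {Inv : LProc k × Store k → Prop}
    (hstep : ∀ s t, LockStep s t → Inv s → Inv t)
    {s t : LProc k × Store k} (h : Relation.ReflTransGen LockStep s t) (hs : Inv s) : Inv t := by
  induction h with
  | refl => exact hs
  | tail _ h ih => exact hstep _ _ h ih

/-- Any lock step from a process of shape `{(x,true),(y,false)}` keeps that shape. -/
lemma inv1_step {k : ℕ} {s t : LProc k × Store k} (h : LockStep s t)
    (hs : ∃ x y, s.1 = (x, true) ::ₘ ({(y, false)} : LProc k)) :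
    ∃ x y, t.1 = (x, true) ::ₘ ({(y, false)} : LProc k) := by
  obtain ⟨x, y, hxy⟩ := hs
  obtain ⟨i, u, b, R, h⟩ := h
  have key : ∃ c, s.1 = (c :: u, b) ::ₘ R ∧ t.1 = (u, b) ::ₘ R := by
    rcases h with ⟨h1, _, h3, _⟩ | ⟨h1, h3, _⟩
    exacts [⟨_, h1, h3⟩, ⟨_, h1, h3⟩]
  obtain ⟨c, h1, h3⟩ := key
  rcases cons_pair_eq (h1.symm.trans hxy) with ⟨he, hR⟩ | ⟨he, hR⟩
  · have hb : b = true := (Prod.mk.injEq .. ▸ he).2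
    exact ⟨u, y, by rw [h3, hR, hb]⟩
  · have hb : b = false := (Prod.mk.injEq .. ▸ he).2
    refine ⟨x, u, ?_⟩
    rw [h3, hR, hb]
    exact Multiset.cons_swap _ _ _
  
/-- Any lock step from a process of shape `{([],false),(y,true)}` keeps that shape. -/
lemma inv2_step {k : ℕ} {s t : LProc k × Store k} (h : LockStep s t)
    (hs : ∃ y, s.1 = (([] : List (LSym k)), false) ::ₘ ({(y, true)} : LProc k)) :
    ∃ y, t.1 = (([] : List (LSym k)), false) ::ₘ ({(y, true)} : LProc k) := by
  obtain ⟨y, hxy⟩ := hs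
  obtain ⟨i, u, b, R, h⟩ := h
  have key : ∃ c, s.1 = (c :: u, b) ::ₘ R ∧ t.1 = (u, b) ::ₘ R := by
    rcases h with ⟨h1, _, h3, _⟩ | ⟨h1, h3, _⟩
    exacts [⟨_, h1, h3⟩, ⟨_, h1, h3⟩]
  obtain ⟨c, h1, h3⟩ := key
  rcases cons_pair_eq (h1.symm.trans hxy) with ⟨he, hR⟩ | ⟨he, hR⟩
  · exact absurd (Prod.mk.injEq .. ▸ he).1 (List.cons_ne_nil _ _)
  · have hb : b = true := (Prod.mk.injEq .. ▸ he).2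
    refine ⟨u, ?_⟩
    rw [h3, hR, hb]
    exact Multiset.cons_swap _ _ _

/-- The SYNCSIMPLE processes `! b1 | ? b2` with at least one `✓` are must-convergent. -/
lemma smust_pair (b1 b2 : Bool) (hb : b1 = true ∨ b2 = true) :
    SMustConv (([SSym.bang], b1) ::ₘ ({([SSym.ques], b2)} : SProc)) := by
  set P1 : SProc := ([SSym.bang], b1) ::ₘ {([SSym.ques], b2)} with hP1
  set Q2 : SProc := (([], b1) : SSub) ::ₘ {(([], b2) : SSub)} with hQ2
  have hstep1 : SysStep P1 Q2 := ⟨[], [], b1, b2, 0, rfl, rfl⟩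
  have hsucc : SSuccessful Q2 := by
    rcases hb with hb | hb <;> subst hb <;> simp [SSuccessful, hQ2]
  have hmayP1 : SMayConv P1 := ⟨Q2, Relation.ReflTransGen.single hstep1, hsucc⟩
  have hmayQ2 : SMayConv Q2 := ⟨Q2, Relation.ReflTransGen.refl, hsucc⟩
  have hreach : ∀ Q, Relation.ReflTransGen SysStep P1 Q → Q = P1 ∨ Q = Q2 := by
    intro Q h
    induction h with
    | refl => exact Or.inl rfl
    | tail _ hst ih =>
      rcases ih with rfl | rfl
      · obtain ⟨u1, u2, c1, c2, R, h1, h2⟩ := hst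
        rcases cons_pair_eq h1.symm with ⟨he, hR⟩ | ⟨he, hR⟩
        · have hu1 : u1 = [] := by
            have := (Prod.mk.injEq .. ▸ he).1
            simpa using this
          have hc1 : c1 = b1 := (Prod.mk.injEq .. ▸ he).2
          rcases (Multiset.singleton_eq_cons_iff _).1 hR.symm with ⟨he2, hR2⟩
          have hu2 : u2 = [] := by
            have := (Prod.mk.injEq .. ▸ he2.symm).1
            simpa using this
          have hc2 : c2 = b2 := (Prod.mk.injEq .. ▸ he2.symm).2
          right
          rw [h2, hu1, hu2, hc1, hc2, hR2, hQ2]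
          rfl
        · exfalso
          have := (Prod.mk.injEq .. ▸ he).1
          simp at this
      · exfalso
        obtain ⟨u1, u2, c1, c2, R, h1, _⟩ := hst
        have hm : ((SSym.bang :: u1, c1) : SSub) ∈ Q2 := by
          rw [h1]; exact Multiset.mem_cons_self _ _
        simp [hQ2] at hm
  intro Q h
  rcases hreach Q h with rfl | rfl
  exacts [hmayP1, hmayQ2]

end AuxProof

/-- for a correct compositional translation with `k ≥ 1` locks, there
is a reduction sequence of `τ(!) | τ(?)` from the initial store that executes every
symbol of both `τ(!)` and `τ(?)`. -/
theorem full_execution_exists :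
    ∀ (k : ℕ), 1 ≤ k → ∀ (IS : Store k) (tb tq : List (LSym k)),
      Correct IS tb tq →
      ∃ C : Store k,
        Relation.ReflTransGen LockStep
          (({(tb, false), (tq, false)} : LProc k), IS)
          (({(([] : List (LSym k)), false), (([] : List (LSym k)), false)} : LProc k), C) := by
  intro k _ IS tb tq hcorr
  -- Leg 1: !✓ | ?0 is must-convergent, hence some lock run fully executes tb.
  have h1 : LMustConv ((transProc tb tq (([SSym.bang], true) ::ₘ {([SSym.ques], false)}), IS)
      : LProc k × Store k) :=
    (hcorr _).2.mp (smust_pair true false (Or.inl rfl))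
  have htrans1 : transProc tb tq (([SSym.bang], true) ::ₘ {([SSym.ques], false)})
      = ((tb, true) ::ₘ {(tq, false)} : LProc k) := by
    simp [transProc, transSub]
  rw [htrans1] at h1
  obtain ⟨t1, ρ1, hsucc1⟩ := h1 _ Relation.ReflTransGen.refl
  obtain ⟨x, y, ht1⟩ :=
    inv_rtg (fun s t h hs => inv1_step h hs) ρ1 ⟨tb, tq, rfl⟩
  have hx : x = [] := by
    have hm : (([], true) : LSub k) ∈ t1.1 := hsucc1
    rw [ht1] at hm
    rcases Multiset.mem_cons.1 hm with h | h
    · exact ((Prod.mk.injEq .. ▸ h).1).symm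
    · simp at h
  subst hx
  -- Transfer leg 1 to flags (false, true) by negating flags.
  have ρ1neg := rtg_lock_map (fun b => !b) ρ1
  simp only [ht1, Multiset.map_cons, Multiset.map_singleton, Bool.not_true, Bool.not_false] at ρ1neg
  -- Leg 2: !0 | ?✓ is must-convergent; the state reached by ρ1neg is reachable from it.
  have h2 : LMustConv ((transProc tb tq (([SSym.bang], false) ::ₘ {([SSym.ques], true)}), IS)
      : LProc k × Store k) :=
    (hcorr _).2.mp (smust_pair false true (Or.inr rfl))
  have htrans2 : transProc tb tq (([SSym.bang], false) ::ₘ {([SSym.ques], true)})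
      = ((tb, false) ::ₘ {(tq, true)} : LProc k) := by
    simp [transProc, transSub]
  rw [htrans2] at h2
  obtain ⟨t2, ρ2, hsucc2⟩ :=
    h2 ((((([] : List (LSym k)), false) ::ₘ {(y, true)} : LProc k)), t1.2) ρ1neg
  obtain ⟨z, ht2⟩ := inv_rtg (fun s t h hs => inv2_step h hs) ρ2 ⟨y, rfl⟩
  have hz : z = [] := by
    have hm : (([], true) : LSub k) ∈ t2.1 := hsucc2
    rw [ht2] at hm
    rcases Multiset.mem_cons.1 hm with h | h
    · exact absurd (Prod.mk.injEq .. ▸ h).2 (by simp)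
    · have := Multiset.mem_singleton.1 h
      exact ((Prod.mk.injEq .. ▸ this).1).symm
  subst hz
  -- Compose the const-false transfers of the two legs.
  refine ⟨t2.2, ?_⟩
  have ρ1f := rtg_lock_map (fun _ => false) ρ1
  have ρ2f := rtg_lock_map (fun _ => false) ρ2
  simp only [ht1, Multiset.map_cons, Multiset.map_singleton] at ρ1f
  simp only [ht2, Multiset.map_cons, Multiset.map_singleton] at ρ2f
  have ρ2f' : Relation.ReflTransGen LockStep
      (((([] : List (LSym k)), false) ::ₘ {(y, false)} : LProc k), t1.2)
      (((([] : List (LSym k)), false) ::ₘ {(([] : List (LSym k)), false)} : LProc k), t2.2) := by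
    simpa using ρ2f
  exact (by simpa using ρ1f : Relation.ReflTransGen LockStep _ _).trans ρ2f'
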